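/- (Eliminating a loop.) The complex (M, d) satisfies d∘d = 0 and admits a special deformation retract, as R0-modules, onto the free rank-2 module N = R0 × R0 with zero differential: there exist R0-linear maps P : M → N, I : N → M, H : M → M with P∘d = 0, d∘I = 0, P∘I = id, id − I∘P = H∘d + d∘H, P∘H = 0, H∘I = 0, and H∘H = 0. (One may take I(c0, c1) = ((c0 + c1·y)·e, 0), P given by reducing the e-coefficient modulo y² − h and taking its two coefficients, and H given by H(α·e) = q·f where α = r + (y² − h)·q with deg r < 2 and H(β·f) = 0.) -/

import Mathlib

open Polynomial

private theorem add_divByMonic' {R : Type*} [CommRing R] {q : R[X]} (hq : q.Monic)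
    (p₁ p₂ : R[X]) : (p₁ + p₂) /ₘ q = p₁ /ₘ q + p₂ /ₘ q := by
  apply hq.isRegular.left
  have e1 := modByMonic_add_div p₁ q
  have e2 := modByMonic_add_div p₂ q
  have e3 := modByMonic_add_div (p₁ + p₂) q
  have e4 : (p₁ + p₂) %ₘ q = p₁ %ₘ q + p₂ %ₘ q := add_modByMonic p₁ p₂
  rw [e4] at e3
  linear_combination e3 - e1 - e2

private theorem smul_divByMonic' {R : Type*} [CommRing R] {q : R[X]} (hq : q.Monic)
    (c : R) (p : R[X]) : (c • p) /ₘ q = c • (p /ₘ q) := by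
  apply hq.isRegular.left
  have e1 := modByMonic_add_div p q
  have e3 := modByMonic_add_div (c • p) q
  have e4 : (c • p) %ₘ q = c • (p %ₘ q) := smul_modByMonic c p
  rw [e4] at e3
  simp only [smul_eq_C_mul] at *
  linear_combination e3 - C c * e1

/-- `_ /ₘ q` as an `R`-linear map, for `q` monic. -/
private noncomputable def divByMonicHom' {R : Type*} [CommRing R] {q : R[X]} (hq : q.Monic) :
    R[X] →ₗ[R] R[X] where
  toFun p := p /ₘ q
  map_add' := add_divByMonic' hq
  map_smul' := smul_divByMonic' hq

set_option maxHeartbeats 1000000 in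
theorem stmt_10 (R0 : Type*) [CommRing R0] (h : R0)
    (d : (Polynomial R0 × Polynomial R0) →ₗ[R0] (Polynomial R0 × Polynomial R0))
    (hd : ∀ p : Polynomial R0 × Polynomial R0,
      d p = ((Polynomial.X ^ 2 - Polynomial.C h) * p.2, 0)) :
    d ∘ₗ d = 0 ∧
    ∃ (P : (Polynomial R0 × Polynomial R0) →ₗ[R0] (R0 × R0))
      (I : (R0 × R0) →ₗ[R0] (Polynomial R0 × Polynomial R0))
      (H : (Polynomial R0 × Polynomial R0) →ₗ[R0] (Polynomial R0 × Polynomial R0)),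
      P ∘ₗ d = 0 ∧
      d ∘ₗ I = 0 ∧
      P ∘ₗ I = LinearMap.id ∧
      LinearMap.id - I ∘ₗ P = H ∘ₗ d + d ∘ₗ H ∧
      P ∘ₗ H = 0 ∧
      H ∘ₗ I = 0 ∧
      H ∘ₗ H = 0 := by
  have hdd : d ∘ₗ d = 0 := by
    refine LinearMap.ext fun p => ?_
    simp [LinearMap.comp_apply, hd, hd p]
  refine ⟨hdd, ?_⟩
  rcases subsingleton_or_nontrivial R0 with hs | hnt
  · have : Subsingleton (Polynomial R0 × Polynomial R0) := by
      constructor; intro a b; ext <;> exact Subsingleton.elim _ _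
    exact ⟨0, 0, 0, Subsingleton.elim _ _, Subsingleton.elim _ _, Subsingleton.elim _ _,
      Subsingleton.elim _ _, Subsingleton.elim _ _, Subsingleton.elim _ _, Subsingleton.elim _ _⟩
  set m : Polynomial R0 := X ^ 2 - C h with hm
  have hmonic : m.Monic := by
    have : (X ^ 2 - C h : Polynomial R0) = X ^ 2 + C (-h) := by ring_nf; rw [map_neg]; ring
    rw [hm, this]
    exact monic_X_pow_add_C (-h) (by norm_num)
  have hmdeg : m.degree = 2 := by
    rw [hm]
    compute_degree!
  -- the maps
  let coeffL : ℕ → Polynomial R0 →ₗ[R0] R0 := fun n => Polynomial.lcoeff R0 n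
  let P : (Polynomial R0 × Polynomial R0) →ₗ[R0] (R0 × R0) :=
    LinearMap.prod (coeffL 0 ∘ₗ modByMonicHom m ∘ₗ LinearMap.fst R0 _ _)
      (coeffL 1 ∘ₗ modByMonicHom m ∘ₗ LinearMap.fst R0 _ _)
  let I : (R0 × R0) →ₗ[R0] (Polynomial R0 × Polynomial R0) :=
    LinearMap.prod
      (Algebra.linearMap R0 (Polynomial R0) ∘ₗ LinearMap.fst R0 R0 R0
        + (LinearMap.toSpanSingleton R0 (Polynomial R0) X) ∘ₗ LinearMap.snd R0 R0 R0)
      0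
  let H : (Polynomial R0 × Polynomial R0) →ₗ[R0] (Polynomial R0 × Polynomial R0) :=
    LinearMap.prod 0 (divByMonicHom' hmonic ∘ₗ LinearMap.fst R0 _ _)
  have hPapp : ∀ p : Polynomial R0 × Polynomial R0,
      P p = ((p.1 %ₘ m).coeff 0, (p.1 %ₘ m).coeff 1) := fun p => rfl
  have hIapp : ∀ c : R0 × R0, I c = (C c.1 + c.2 • X, 0) := by
    intro c
    simp only [I, LinearMap.prod_apply, LinearMap.add_apply, LinearMap.comp_apply,
      LinearMap.fst_apply, LinearMap.snd_apply, Algebra.linearMap_apply,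
      LinearMap.toSpanSingleton_apply, LinearMap.zero_apply, Function.prod_apply, algebraMap_eq]
  have hHapp : ∀ p : Polynomial R0 × Polynomial R0, H p = (0, p.1 /ₘ m) := fun p => rfl
  have hmodself : ∀ c₀ c₁ : R0, (C c₀ + c₁ • X) %ₘ m = C c₀ + c₁ • X := by
    intro c₀ c₁
    rw [modByMonic_eq_self_iff hmonic, hmdeg]
    calc (C c₀ + c₁ • X).degree ≤ max (C c₀).degree (c₁ • X).degree := degree_add_le _ _
      _ ≤ 1 := by
          apply max_le
          · exact (degree_C_le).trans (by norm_num)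
          · exact (degree_smul_le _ _).trans (by simp)
      _ < 2 := by norm_num
  refine ⟨P, I, H, ?_, ?_, ?_, ?_, ?_, ?_, ?_⟩
  · -- P ∘ d = 0
    refine LinearMap.ext fun p => ?_
    simp only [LinearMap.comp_apply, hd p, hPapp, LinearMap.zero_apply]
    have : (m * p.2) %ₘ m = 0 := (modByMonic_eq_zero_iff_dvd hmonic).2 ⟨p.2, rfl⟩
    rw [this]
    simp
  · -- d ∘ I = 0
    refine LinearMap.ext fun c => ?_
    simp [LinearMap.comp_apply, hd, hIapp]
  · -- P ∘ I = id
    refine LinearMap.ext fun c => ?_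
    simp only [LinearMap.comp_apply, hIapp, hPapp, LinearMap.id_apply]
    rw [hmodself c.1 c.2]
    ext
    · simp
    · simp [coeff_smul]
  · -- id - I ∘ P = H ∘ d + d ∘ H
    refine LinearMap.ext fun p => ?_
    simp only [LinearMap.sub_apply, LinearMap.add_apply, LinearMap.comp_apply,
      LinearMap.id_apply, hd p, hPapp, hIapp, hHapp, hd]
    have hr : p.1 %ₘ m = C ((p.1 %ₘ m).coeff 0) + ((p.1 %ₘ m).coeff 1) • X := by
      have hdlt : (p.1 %ₘ m).degree ≤ 1 := by
        have := degree_modByMonic_lt p.1 hmonic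
        rw [hmdeg] at this
        exact Order.le_of_lt_succ (by exact_mod_cast this)
      have := eq_X_add_C_of_degree_le_one hdlt
      rw [smul_eq_C_mul]
      linear_combination this
    have hdecomp := modByMonic_add_div p.1 m
    have hmb : (m * p.2) /ₘ m = p.2 := mul_divByMonic_cancel_left p.2 hmonic
    rw [Prod.ext_iff]
    constructor
    · show p.1 - (C ((p.1 %ₘ m).coeff 0) + ((p.1 %ₘ m).coeff 1) • X) = 0 + m * (p.1 /ₘ m)
      rw [← hr]
      linear_combination -hdecomp
    · show p.2 - 0 = m * p.2 /ₘ m + 0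
      rw [hmb]
      ring
  · -- P ∘ H = 0
    refine LinearMap.ext fun p => ?_
    simp [LinearMap.comp_apply, hHapp, hPapp]
  · -- H ∘ I = 0
    refine LinearMap.ext fun c => ?_
    simp only [LinearMap.comp_apply, hIapp, hHapp, LinearMap.zero_apply]
    have hz : (C c.1 + c.2 • X) /ₘ m = 0 :=
      (divByMonic_eq_zero_iff hmonic).2
        ((modByMonic_eq_self_iff hmonic).1 (hmodself c.1 c.2))
    rw [hz]
    rfl
  · -- H ∘ H = 0
    refine LinearMap.ext fun p => ?_
    simp [LinearMap.comp_apply, hHapp]
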